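/- The integral over all of ℝ³ of W³·(ΛW)³ equals 0. -/

import Mathlib

open MeasureTheory

/-- The ground state soliton `W(x) = √3 (1 + 3|x|²)^(-1/2)` on `ℝ³`. -/
noncomputable def W (x : Fin 3 → ℝ) : ℝ :=
  Real.sqrt 3 * (1 + 3 * ∑ i, x i ^ 2) ^ (-(1 : ℝ) / 2)

/-- The `i`-th partial derivative of a function on `ℝ³`. -/
noncomputable def pderiv3 (i : Fin 3) (f : (Fin 3 → ℝ) → ℝ) (x : Fin 3 → ℝ) : ℝ :=
  fderiv ℝ f x (Pi.single i 1)

/-- The Euclidean Laplacian on `ℝ³`, `Δf = ∑ᵢ ∂ᵢ∂ᵢ f`. -/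
noncomputable def laplacian3 (f : (Fin 3 → ℝ) → ℝ) (x : Fin 3 → ℝ) : ℝ :=
  ∑ i, pderiv3 i (pderiv3 i f) x

/-- `ΛW = (1/2)W + x·∇W`, the scaling derivative of the soliton. -/
noncomputable def LamW (x : Fin 3 → ℝ) : ℝ :=
  (1 / 2) * W x + ∑ i, x i * pderiv3 i W x

namespace Wp

open Real Filter Set

noncomputable def s (x : Fin 3 → ℝ) : ℝ := ∑ i, x i ^ 2

lemma s_nonneg (x : Fin 3 → ℝ) : 0 ≤ s x := Finset.sum_nonneg fun i _ => sq_nonneg _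

lemma q_pos (x : Fin 3 → ℝ) : (0:ℝ) < 1 + 3 * s x := by nlinarith [s_nonneg x]

lemma hasFDerivAt_s (x : Fin 3 → ℝ) :
    HasFDerivAt s (∑ i, (2 * x i) • ContinuousLinearMap.proj (R := ℝ)
      (φ := fun _ : Fin 3 => ℝ) i) x := by
  have h : ∀ i ∈ Finset.univ, HasFDerivAt (fun y : Fin 3 → ℝ => y i ^ 2)
      ((2 * x i) • ContinuousLinearMap.proj (R := ℝ) (φ := fun _ : Fin 3 => ℝ) i) x := by
    intro i _
    have h1 := (ContinuousLinearMap.proj (R := ℝ) (φ := fun _ : Fin 3 => ℝ) i).hasFDerivAt (x := x)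
    have h2 := h1.mul h1
    convert! h2 using 1
    · ext y; simp [sq]
    · ext y; simp [two_smul]; ring
  convert! HasFDerivAt.sum h using 1

lemma hasFDerivAt_W (x : Fin 3 → ℝ) :
    HasFDerivAt W (Real.sqrt 3 • ((-(1:ℝ)/2) * (1 + 3 * s x) ^ ((-(1:ℝ)/2) - 1)) • (3:ℝ) •
      (∑ i, (2 * x i) • ContinuousLinearMap.proj (R := ℝ) (φ := fun _ : Fin 3 => ℝ) i)) x := by
  have hq : HasFDerivAt (fun y => 1 + 3 * s y)
      ((3:ℝ) • ∑ i, (2 * x i) • ContinuousLinearMap.proj (R := ℝ) (φ := fun _ : Fin 3 => ℝ) i) x :=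
    ((hasFDerivAt_s x).const_mul 3).const_add 1
  have hr : HasDerivAt (fun y : ℝ => y ^ (-(1:ℝ)/2))
      ((-(1:ℝ)/2) * (1 + 3 * s x) ^ ((-(1:ℝ)/2) - 1)) (1 + 3 * s x) :=
    Real.hasDerivAt_rpow_const (Or.inl (q_pos x).ne')
  exact (hr.comp_hasFDerivAt x hq).const_mul (Real.sqrt 3)

lemma pderiv3_W (i : Fin 3) (x : Fin 3 → ℝ) :
    pderiv3 i W x = Real.sqrt 3 * (-(1:ℝ)/2) * (1 + 3 * s x) ^ ((-(1:ℝ)/2) - 1) * (6 * x i) := by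
  rw [pderiv3, (hasFDerivAt_W x).fderiv]
  simp [ContinuousLinearMap.sum_apply, Pi.single_apply, Finset.sum_ite_eq]
  ring

lemma LamW_eq (x : Fin 3 → ℝ) :
    LamW x = Real.sqrt 3 * ((1/2) * (1 + 3 * s x) ^ (-(1:ℝ)/2)
      - 3 * s x * (1 + 3 * s x) ^ ((-(1:ℝ)/2) - 1)) := by
  rw [LamW]
  have : ∑ i, x i * pderiv3 i W x
      = Real.sqrt 3 * (-(1:ℝ)/2) * (1 + 3 * s x) ^ ((-(1:ℝ)/2) - 1) * (6 * s x) := by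
    simp only [pderiv3_W]
    set Q := (1 + 3 * s x) ^ ((-(1:ℝ)/2) - 1) with hQ
    have step : ∀ i : Fin 3, x i * (Real.sqrt 3 * (-(1:ℝ)/2) * Q * (6 * x i))
        = (Real.sqrt 3 * (-(1:ℝ)/2) * Q * 6) * x i ^ 2 := fun i => by ring
    rw [Finset.sum_congr rfl fun i _ => step i, ← Finset.mul_sum,
      show (∑ i, x i ^ 2) = s x from rfl]
    ring
  rw [this, W]
  show _ + _ = _
  rw [show (∑ i, x i ^ 2) = s x from rfl]
  ring

lemma W_mul_LamW (x : Fin 3 → ℝ) :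
    W x * LamW x = (3/2) * (1 - 3 * s x) / (1 + 3 * s x) ^ 2 := by
  have hq := q_pos x
  rw [LamW_eq, W, show (∑ i, x i ^ 2) = s x from rfl]
  have h3 : Real.sqrt 3 * Real.sqrt 3 = 3 := Real.mul_self_sqrt (by norm_num)
  set q := 1 + 3 * s x with hqdef
  have e1 : q ^ (-(1:ℝ)/2) * q ^ (-(1:ℝ)/2) = q⁻¹ := by
    rw [← Real.rpow_add hq, show (-(1:ℝ)/2 + -(1:ℝ)/2) = -1 by norm_num, Real.rpow_neg_one]
  have e2 : q ^ (-(1:ℝ)/2) * q ^ ((-(1:ℝ)/2) - 1) = (q ^ 2)⁻¹ := by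
    rw [← Real.rpow_add hq]
    rw [show (-(1:ℝ)/2 + (-(1:ℝ)/2 - 1)) = ((-2 : ℤ) : ℝ) by norm_num, Real.rpow_intCast,
      show (-2 : ℤ) = -(2:ℤ) by norm_num, zpow_neg, zpow_two, sq]
  set A := q ^ (-(1:ℝ)/2) with hA
  set B := q ^ ((-(1:ℝ)/2) - 1) with hB
  have expand : Real.sqrt 3 * A * (Real.sqrt 3 * ((1/2) * A - 3 * s x * B))
      = (Real.sqrt 3 * Real.sqrt 3) * ((1/2) * (A * A) - 3 * s x * (A * B)) := by ring
  rw [expand, h3, e1, e2]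
  field_simp
  ring

lemma integrand_eq (x : Fin 3 → ℝ) :
    W x ^ 3 * LamW x ^ 3 = 27/8 * (1 - 3 * s x) ^ 3 / (1 + 3 * s x) ^ 6 := by
  have hq := q_pos x
  rw [← mul_pow, W_mul_LamW]
  rw [div_pow]
  have : ((1 + 3 * s x) ^ 2) ^ 3 = (1 + 3 * s x) ^ 6 := by ring
  rw [this]
  congr 1
  ring

/-- radial profile of the integrand -/
noncomputable def f (r : ℝ) : ℝ := 27/8 * (1 - 3 * r ^ 2) ^ 3 / (1 + 3 * r ^ 2) ^ 6

/-- antiderivative of `r ^ 2 * f r` -/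
noncomputable def F (r : ℝ) : ℝ :=
  (45 * r ^ 3 - 54 * r ^ 5 + 405 * r ^ 7) / (40 * (1 + 3 * r ^ 2) ^ 5)

lemma den_pos (r : ℝ) : (0:ℝ) < 1 + 3 * r ^ 2 := by positivity

lemma hasDerivAt_F (r : ℝ) : HasDerivAt F (r ^ 2 * f r) r := by
  have h1 : HasDerivAt (fun r : ℝ => 45 * r ^ 3 - 54 * r ^ 5 + 405 * r ^ 7)
      (135 * r ^ 2 - 270 * r ^ 4 + 2835 * r ^ 6) r := by
    have := (((hasDerivAt_pow 3 r).const_mul (45:ℝ)).sub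
      ((hasDerivAt_pow 5 r).const_mul (54:ℝ))).add ((hasDerivAt_pow 7 r).const_mul (405:ℝ))
    convert! this using 1
    push_cast; ring
  have h2 : HasDerivAt (fun r : ℝ => 40 * (1 + 3 * r ^ 2) ^ 5)
      (1200 * r * (1 + 3 * r ^ 2) ^ 4) r := by
    have := ((((hasDerivAt_pow 2 r).const_mul (3:ℝ)).const_add 1).pow 5).const_mul (40:ℝ)
    convert! this using 1
    push_cast; ring
  have hne : 40 * (1 + 3 * r ^ 2) ^ 5 ≠ 0 := by positivity
  have := h1.div h2 hne
  convert! this using 1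
  rw [f]
  have hne2 : (1 + 3 * r ^ 2) ≠ 0 := (den_pos r).ne'
  field_simp
  ring

lemma tendsto_F : Tendsto F atTop (nhds 0) := by
  have hG : Continuous
      (fun t : ℝ => (45 * t ^ 7 - 54 * t ^ 5 + 405 * t ^ 3) / (40 * (t ^ 2 + 3) ^ 5)) := by
    apply Continuous.div (by continuity) (by continuity)
    intro t; positivity
  have h0 : (fun t : ℝ => (45 * t ^ 7 - 54 * t ^ 5 + 405 * t ^ 3) / (40 * (t ^ 2 + 3) ^ 5)) 0
      = 0 := by norm_num
  have h1 : Tendsto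
      (fun r : ℝ => (45 * r⁻¹ ^ 7 - 54 * r⁻¹ ^ 5 + 405 * r⁻¹ ^ 3) / (40 * (r⁻¹ ^ 2 + 3) ^ 5))
      atTop (nhds 0) := by
    rw [← h0]
    exact (hG.continuousAt).tendsto.comp tendsto_inv_atTop_zero
  refine h1.congr' ?_
  filter_upwards [Ioi_mem_atTop (0:ℝ)] with r (hr : 0 < r)
  rw [F]
  have hrne : r ≠ 0 := hr.ne'
  field_simp

lemma f_integrable : IntegrableOn (fun r : ℝ => r ^ 2 * f r) (Ioi 0) := by
  have hb : Integrable (fun r : ℝ => 27/8 * (1 + r ^ 2)⁻¹) :=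
    integrable_inv_one_add_sq.const_mul _
  refine (hb.restrict (s := Ioi 0)).mono' ?_ ?_
  · refine ((continuous_pow 2).mul ?_).aestronglyMeasurable
    exact Continuous.div (by continuity) (by continuity) fun r => by positivity
  · refine Eventually.of_forall fun r => ?_
    have h1 : |1 - 3 * r ^ 2| ≤ 1 + 3 * r ^ 2 :=
      abs_le.2 ⟨by nlinarith [sq_nonneg r], by nlinarith [sq_nonneg r]⟩
    have hd := den_pos r
    have habs : |f r| = 27/8 * |1 - 3 * r ^ 2| ^ 3 / (1 + 3 * r ^ 2) ^ 6 := by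
      rw [f, abs_div, abs_mul, abs_pow, abs_of_pos (pow_pos hd 6),
        abs_of_nonneg (by norm_num : (0:ℝ) ≤ 27/8)]
    rw [Real.norm_eq_abs, abs_mul, abs_pow, sq_abs, habs]
    set A := |1 - 3 * r ^ 2| ^ 3 with hA
    have hA0 : 0 ≤ A := by positivity
    have h3 : A ≤ (1 + 3 * r ^ 2) ^ 3 := pow_le_pow_left₀ (abs_nonneg _) h1 3
    have h4 : r ^ 2 * (1 + r ^ 2) ≤ (1 + 3 * r ^ 2) ^ 3 := by
      nlinarith [sq_nonneg r, sq_nonneg (r ^ 2), sq_nonneg (r ^ 3)]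
    have h5 : r ^ 2 * A * (1 + r ^ 2) ≤ (1 + 3 * r ^ 2) ^ 6 := by
      calc r ^ 2 * A * (1 + r ^ 2) = (r ^ 2 * (1 + r ^ 2)) * A := by ring
        _ ≤ (r ^ 2 * (1 + r ^ 2)) * (1 + 3 * r ^ 2) ^ 3 :=
            mul_le_mul_of_nonneg_left h3 (by positivity)
        _ ≤ (1 + 3 * r ^ 2) ^ 3 * (1 + 3 * r ^ 2) ^ 3 :=
            mul_le_mul_of_nonneg_right h4 (by positivity)
        _ = (1 + 3 * r ^ 2) ^ 6 := by ring
    have e1 : r ^ 2 * (27/8 * A / (1 + 3 * r ^ 2) ^ 6)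
        = (27/8 * (r ^ 2 * A)) / (1 + 3 * r ^ 2) ^ 6 := by ring
    rw [e1, inv_eq_one_div, show (27/8 : ℝ) * (1 / (1 + r ^ 2)) = (27/8) / (1 + r ^ 2) by ring,
      div_le_div_iff₀ (by positivity) (by positivity)]
    nlinarith [h5]

lemma radial_integral_zero : ∫ r in Ioi (0:ℝ), r ^ 2 • f r = 0 := by
  have := integral_Ioi_of_hasDerivAt_of_tendsto' (f := F) (f' := fun r => r ^ 2 * f r) (a := 0)
    (fun x _ => hasDerivAt_F x) f_integrable tendsto_F
  simp only [smul_eq_mul]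
  rw [this, F]
  norm_num

end Wp

/-- `∫_{ℝ³} W³ (ΛW)³ = 0`. -/
theorem integral_W3_LamW3_eq_zero :
    ∫ x : Fin 3 → ℝ, (W x) ^ 3 * (LamW x) ^ 3 = 0 := by
  have h1 := (EuclideanSpace.volume_preserving_symm_measurableEquiv_toLp (Fin 3)).integral_comp
    (MeasurableEquiv.toLp 2 (Fin 3 → ℝ)).symm.measurableEmbedding
    (fun x => (W x) ^ 3 * (LamW x) ^ 3)
  rw [← h1]
  have h2 : ∀ y : EuclideanSpace ℝ (Fin 3),
      (fun x => (W x) ^ 3 * (LamW x) ^ 3) ((MeasurableEquiv.toLp 2 (Fin 3 → ℝ)).symm y)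
      = Wp.f ‖y‖ := by
    intro y
    have hs : Wp.s ((MeasurableEquiv.toLp 2 (Fin 3 → ℝ)).symm y) = ‖y‖ ^ 2 := by
      rw [EuclideanSpace.norm_eq]
      rw [Real.sq_sqrt (Finset.sum_nonneg fun i _ => sq_nonneg _)]
      simp [Wp.s, MeasurableEquiv.toLp, sq_abs]
      rfl
    simp only [Wp.integrand_eq, hs, Wp.f]
  rw [integral_congr_ae (Filter.Eventually.of_forall h2)]
  rw [integral_fun_norm_addHaar (volume : Measure (EuclideanSpace ℝ (Fin 3))) Wp.f]
  rw [finrank_euclideanSpace_fin]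
  norm_num
  refine Or.inr ?_
  simpa using Wp.radial_integral_zero
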